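/- A tree T is not accepted by A_{▷⟨E;U⟩} if and only if either (a) T has at least |E|+1 direct subtrees each accepted by no automaton A_u for u ∈ U, or (b) there exists k with 0 ≤ k ≤ |E| such that T has at least k direct subtrees accepted by no A_u (u ∈ U), and there do not exist |E| direct subtrees witnessing satisfaction of the existential part E of which at least k are accepted by no A_u (u ∈ U). -/

import Mathlib

/-- A `Σ`-labelled tree of arbitrary (finite) arity over direction set `D`:
a prefix-closed set of nodes (words over `D`) containing the root, with a labelling. -/
structure STree (D : Type) (A : Type) where
  nodes : Set (List D)
  root_mem : ([] : List D) ∈ nodes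
  prefix_closed : ∀ n d, n ++ [d] ∈ nodes → n ∈ nodes
  label : List D → A

/-- Positive Boolean combinations over atoms `α`. -/
inductive PBF (α : Type) : Type
  | tru : PBF α
  | fls : PBF α
  | atom : α → PBF α
  | and : PBF α → PBF α → PBF α
  | or : PBF α → PBF α → PBF α

def PBF.map {α β : Type} (f : α → β) : PBF α → PBF β
  | .tru => .tru
  | .fls => .fls
  | .atom a => .atom (f a)
  | .and φ ψ => .and (φ.map f) (ψ.map f)
  | .or φ ψ => .or (φ.map f) (ψ.map f)

/-- An EU-pair over state set `Q`: a multiset `E` of states and a set `U` of states. -/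
abbrev EUPair (Q : Type) := Multiset Q × Set Q

def EUPair.map {Q Q' : Type} (f : Q → Q') (p : EUPair Q) : EUPair Q' :=
  (p.1.map f, f '' p.2)

/-- The marking `ν` of the `children` satisfies the EU-pair `p` (relation `⊨⁺`):
some unitary submarking `f` of `ν` matches the existential part `p.1` on a family
`m` of pairwise distinct children and maps every other child into `p.2`. -/
def SatEU {D Q : Type} (children : Set D) (ν : D → Set Q) (p : EUPair Q) : Prop :=
  ∃ f : D → Q, (∀ d ∈ children, f d ∈ ν d) ∧
    ∃ m : Multiset D, m.Nodup ∧ (∀ d ∈ m, d ∈ children) ∧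
      m.map f = p.1 ∧ ∀ d ∈ children, d ∉ m → f d ∈ p.2

/-- `⊨⁺` extended to positive Boolean combinations of EU-pairs. -/
def SatPBF {D Q : Type} (children : Set D) (ν : D → Set Q) : PBF (EUPair Q) → Prop
  | .tru => True
  | .fls => False
  | .atom p => SatEU children ν p
  | .and φ ψ => SatPBF children ν φ ∧ SatPBF children ν ψ
  | .or φ ψ => SatPBF children ν φ ∨ SatPBF children ν ψ

/-- Alternating EU parity tree automaton over alphabet `A`. -/
structure APTA (A : Type) where
  Q : Type
  init : Q
  δ : Q → A → PBF (EUPair Q)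
  ω : Q → ℕ

/-- Parity acceptance for an infinite sequence of priorities: the least priority
occurring infinitely often is even. -/
def ParitySeq (s : ℕ → ℕ) : Prop :=
  Even (sInf {c | {k | s k = c}.Infinite})

namespace APTA

variable {A D : Type}

/-- The automaton state attached to a node of an execution tree. -/
def stateOf (M : APTA A) (e : List (D × M.Q)) : M.Q :=
  match e.getLast? with
  | none => M.init
  | some p => p.2

/-- `et` is an execution tree of `M` over the input tree `T`: a prefix-closed set of
words over `D × Q`, rooted at `[]` (in state `init`), projecting into `T`,
whose induced markings satisfy the transition function everywhere. -/
def IsExecTree (M : APTA A) (T : STree D A) (et : Set (List (D × M.Q))) : Prop :=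
  ([] ∈ et) ∧ (∀ e p, e ++ [p] ∈ et → e ∈ et) ∧
  (∀ e ∈ et, e.map Prod.fst ∈ T.nodes) ∧
  (∀ e ∈ et,
    SatPBF {d | (e.map Prod.fst) ++ [d] ∈ T.nodes}
      (fun d => {q | e ++ [(d, q)] ∈ et})
      (M.δ (M.stateOf e) (T.label (e.map Prod.fst))))

/-- `T` is accepted by `M`: some execution tree all of whose infinite branches
satisfy the parity condition. (Finite branches are accepting.) -/
def Accepts (M : APTA A) (T : STree D A) : Prop :=
  ∃ et : Set (List (D × M.Q)), M.IsExecTree T et ∧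
    ∀ b : ℕ → D × M.Q, (∀ k, (List.range k).map b ∈ et) →
      ParitySeq (fun k => M.ω (b k).2)

/-- The automaton `M` with initial state replaced by `q`. -/
def withInit (M : APTA A) (q : M.Q) : APTA A := { M with init := q }

end APTA

/-- The subtree of `T` rooted at node `n0`. -/
def STree.subAt {D A : Type} (T : STree D A) (n0 : List D) (h : n0 ∈ T.nodes) :
    STree D A where
  nodes := {m | n0 ++ m ∈ T.nodes}
  root_mem := by simpa using h
  prefix_closed := by
    intro n d hm
    have hm' : (n0 ++ n) ++ [d] ∈ T.nodes := by
      simpa [List.append_assoc] using hm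
    exact T.prefix_closed (n0 ++ n) d hm'
  label := fun m => T.label (n0 ++ m)

/-- The subtree of `T` rooted at the successor `d` of the root is accepted by `M`
started in state `q` (false when `d` is not a successor of the root). -/
def AccChild {A D : Type} (M : APTA A) (q : M.Q) (T : STree D A) (d : D) : Prop :=
  ∃ h : [d] ∈ T.nodes, (M.withInit q).Accepts (T.subAt [d] h)

/-- The automaton `A_{▷E}`: a fresh initial state whose transition (on every letter)
is the EU-pair `⟨E;{q⊤}⟩`, the rest of `M` unchanged. -/
def arrow {A : Type} (M : APTA A) (qT : M.Q) (E : Multiset M.Q) : APTA A where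
  Q := Option M.Q
  init := none
  δ := fun q a =>
    match q with
    | none => PBF.atom (E.map some, ({some qT} : Set (Option M.Q)))
    | some q => (M.δ q a).map (EUPair.map some)
  ω := fun q =>
    match q with
    | none => 0
    | some q => M.ω q

/-- The automaton `A_{▷⟨E;U⟩}`: fresh initial state with transition `⟨E;U⟩`. -/
def arrowEU {A : Type} (M : APTA A) (E : Multiset M.Q) (U : Set M.Q) : APTA A where
  Q := Option M.Q
  init := none
  δ := fun q a =>
    match q with
    | none => PBF.atom (E.map some, some '' U)
    | some q => (M.δ q a).map (EUPair.map some)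
  ω := fun q =>
    match q with
    | none => 0
    | some q => M.ω q

/-- A witness (minimal accepting execution tree, restricted to the root level) for
`A_{▷F}` on `T`: pairwise-distinct successors of the root matched with the states
of `F`, each accepting the corresponding subtree. -/
def Witness {A D : Type} (M : APTA A) (T : STree D A) (F : Multiset M.Q)
    (m : Multiset (D × M.Q)) : Prop :=
  (m.map Prod.fst).Nodup ∧ m.map Prod.snd = F ∧ ∀ p ∈ m, AccChild M p.2 T p.1

section AuxMultiset

lemma exists_le_of_le_map {α β : Type} {f : α → β} {t : Multiset α} {s : Multiset β}
    (h : s ≤ t.map f) : ∃ b ≤ t, b.map f = s := by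
  classical
  induction s using Multiset.induction generalizing t with
  | empty => exact ⟨0, Multiset.zero_le _, rfl⟩
  | cons x s ih =>
    have hx : x ∈ t.map f := Multiset.mem_of_le h (Multiset.mem_cons_self _ _)
    obtain ⟨a, ha, rfl⟩ := Multiset.mem_map.1 hx
    have h1 : s ≤ (t.map f).erase (f a) := by
      rw [← Multiset.cons_erase hx] at h
      exact (Multiset.cons_le_cons_iff _).1 h
    rw [← Multiset.map_erase_of_mem _ _ ha] at h1
    obtain ⟨b, hb, rfl⟩ := ih h1
    refine ⟨a ::ₘ b, ?_, by simp⟩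
    calc a ::ₘ b ≤ a ::ₘ t.erase a := Multiset.cons_le_cons _ hb
    _ = t := Multiset.cons_erase ha

lemma nodup_fst_unique {α β : Type} {m : Multiset (α × β)} (h : (m.map Prod.fst).Nodup)
    {a : α} {b c : β} (h1 : (a, b) ∈ m) (h2 : (a, c) ∈ m) : b = c := by
  induction m using Multiset.induction with
  | empty => simp at h1
  | cons p m ih =>
    rw [Multiset.map_cons, Multiset.nodup_cons] at h
    rcases Multiset.mem_cons.1 h1 with h1 | h1 <;> rcases Multiset.mem_cons.1 h2 with h2 | h2
    · rw [← h1] at h2; exact (congrArg Prod.snd h2).symm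
    · exact absurd (Multiset.mem_map_of_mem Prod.fst h2)
        (by rw [← h1] at h; exact h.1)
    · exact absurd (Multiset.mem_map_of_mem Prod.fst h1)
        (by rw [← h2] at h; exact h.1)
    · exact ih h.2 h1 h2

end AuxMultiset

section AuxParity

lemma infinite_shift {s t : ℕ → ℕ} (h : ∀ k, s (k + 1) = t k) (c : ℕ) :
    {k | s k = c}.Infinite ↔ {k | t k = c}.Infinite := by
  constructor
  · intro hs
    have hsub : {k | s k = c} ⊆ insert 0 ((· + 1) '' {k | t k = c}) := by
      intro k hk
      match k with
      | 0 => exact Set.mem_insert _ _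
      | n + 1 => exact Set.mem_insert_of_mem _ ⟨n, by simpa [h n] using hk, rfl⟩
    by_contra hfin
    rw [Set.not_infinite] at hfin
    exact hs ((hfin.image _).insert 0 |>.subset hsub)
  · intro ht
    have hsub : (· + 1) '' {k | t k = c} ⊆ {k | s k = c} := by
      rintro _ ⟨n, hn, rfl⟩; simpa [h n] using hn
    exact (ht.image (fun a _ b _ hab => by omega)).mono hsub

lemma paritySeq_shift {s t : ℕ → ℕ} (h : ∀ k, s (k + 1) = t k) :
    ParitySeq t ↔ ParitySeq s := by
  unfold ParitySeq
  have : {c | {k | s k = c}.Infinite} = {c | {k | t k = c}.Infinite} := by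
    ext c; exact infinite_shift h c
  rw [this]

end AuxParity
section AuxSat

variable {D Q : Type}

/-- lift a pair by applying `some` to the state. -/
def liftp (p : D × Q) : D × Option Q := (p.1, some p.2)

lemma liftp_injective : Function.Injective (liftp (D := D) (Q := Q)) := by
  rintro ⟨a, b⟩ ⟨c, d⟩ h
  simpa [liftp, Prod.ext_iff] using h

lemma satPBF_push {C : Set D} {ν : D → Set Q} {ν' : D → Set (Option Q)}
    (hν : ∀ d ∈ C, some '' ν d ⊆ ν' d) :
    ∀ φ : PBF (EUPair Q), SatPBF C ν φ → SatPBF C ν' (φ.map (EUPair.map some))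
  | .tru, _ => trivial
  | .fls, h => h.elim
  | .atom p, h => by
    obtain ⟨f, hf, m, hnd, hmem, hmap, hrest⟩ := h
    refine ⟨fun d => some (f d), fun d hd => hν d hd ⟨f d, hf d hd, rfl⟩,
      m, hnd, hmem, ?_, ?_⟩
    · show m.map (some ∘ f) = (p.1.map some)
      rw [← Multiset.map_map, hmap]
    · intro d hd hdm
      exact ⟨f d, hrest d hd hdm, rfl⟩
  | .and φ ψ, h => ⟨satPBF_push hν φ h.1, satPBF_push hν ψ h.2⟩
  | .or φ ψ, h => h.elim (fun h => Or.inl (satPBF_push hν φ h))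
      (fun h => Or.inr (satPBF_push hν ψ h))

lemma satPBF_pull [Nonempty Q] {C : Set D} {ν' : D → Set (Option Q)} :
    ∀ φ : PBF (EUPair Q), SatPBF C ν' (φ.map (EUPair.map some)) →
      SatPBF C (fun d => some ⁻¹' ν' d) φ
  | .tru, _ => trivial
  | .fls, h => h.elim
  | .atom p, h => by
    obtain ⟨f, hf, m, hnd, hmem, hmap, hrest⟩ := h
    have hsome : ∀ d ∈ C, ∃ q, f d = some q := by
      intro d hd
      by_cases hdm : d ∈ m
      · have : f d ∈ m.map f := Multiset.mem_map_of_mem f hdm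
        rw [hmap] at this
        obtain ⟨q, -, hq⟩ := Multiset.mem_map.1 this
        exact ⟨q, hq.symm⟩
      · obtain ⟨q, -, hq⟩ := hrest d hd hdm
        exact ⟨q, hq.symm⟩
    set g : D → Q := fun d => (f d).getD (Classical.arbitrary Q) with hg
    have hfg : ∀ d ∈ C, f d = some (g d) := by
      intro d hd; obtain ⟨q, hq⟩ := hsome d hd; simp [hg, hq]
    refine ⟨g, fun d hd => ?_, m, hnd, hmem, ?_, ?_⟩
    · show some (g d) ∈ ν' d
      rw [← hfg d hd]; exact hf d hd
    · apply Multiset.map_injective (Option.some_injective Q)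
      show (m.map g).map some = (EUPair.map some p).1
      rw [Multiset.map_map, ← hmap]
      exact Multiset.map_congr rfl fun d hd => (hfg d (hmem d hd)).symm
    · intro d hd hdm
      have := hrest d hd hdm
      rw [hfg d hd] at this
      obtain ⟨u, hu, hequ⟩ := this
      rwa [Option.some_injective Q hequ] at hu
  | .and φ ψ, h => ⟨satPBF_pull φ h.1, satPBF_pull ψ h.2⟩
  | .or φ ψ, h => h.elim (fun h => Or.inl (satPBF_pull φ h))
      (fun h => Or.inr (satPBF_pull ψ h))

end AuxSat
section AuxAut

variable {A D : Type} {M : APTA A} {E : Multiset M.Q} {U : Set M.Q}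

lemma stateOf_cons_lift (q : M.Q) (d : D) (e : List (D × M.Q)) :
    (arrowEU M E U).stateOf
        (((d, some q) :: e.map liftp : List (D × Option M.Q))) =
      some ((M.withInit q).stateOf e) := by
  induction e using List.reverseRecOn with
  | nil => rfl
  | append_singleton e p _ =>
    simp only [List.map_append, List.map_cons, List.map_nil]
    have h1 : ((d, some q) :: (e.map liftp ++ [liftp p]) :
        List (D × Option M.Q)).getLast? = some (liftp p) := by
      rw [← List.cons_append, List.getLast?_concat]
    have h2 : (e ++ [p]).getLast? = some p := List.getLast?_concat
    unfold APTA.stateOf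
    erw [h1, h2]
    rfl

lemma restrict_cond {T : STree D A} {et : Set (List (D × Option M.Q))}
    (hsat : ∀ l ∈ et, SatPBF {d | l.map Prod.fst ++ [d] ∈ T.nodes}
        (fun d => {q : Option M.Q | l ++ [(d, q)] ∈ et})
        ((arrowEU M E U).δ ((arrowEU M E U).stateOf l) (T.label (l.map Prod.fst))))
    (d : D) (q : M.Q) (e : List (D × M.Q)) (he : (d, some q) :: e.map liftp ∈ et) :
    SatPBF {d' | e.map Prod.fst ++ [d'] ∈ {l | [d] ++ l ∈ T.nodes}}
      (fun d' => {q' : M.Q | (d, some q) :: (e ++ [(d', q')]).map liftp ∈ et})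
      (M.δ ((M.withInit q).stateOf e) (T.label (d :: e.map Prod.fst))) := by
  haveI : Nonempty M.Q := ⟨q⟩
  have hs := hsat ((d, some q) :: e.map liftp) he
  have hfst : ((d, some q) :: e.map liftp : List (D × Option M.Q)).map Prod.fst
      = d :: e.map Prod.fst := by simp [liftp]
  rw [hfst, stateOf_cons_lift] at hs
  have key := satPBF_pull (C := {d' | (d :: e.map Prod.fst) ++ [d'] ∈ T.nodes})
    (ν' := fun d' => {q' : Option M.Q | ((d, some q) :: e.map liftp :
        List (D × Option M.Q)) ++ [(d', q')] ∈ et})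
    (M.δ ((M.withInit q).stateOf e) (T.label (d :: e.map Prod.fst))) hs
  have hν : (fun d' => {q' : M.Q | (d, some q) :: (e ++ [(d', q')]).map liftp ∈ et}) =
      fun d' => some ⁻¹' {q' : Option M.Q | ((d, some q) :: e.map liftp :
        List (D × Option M.Q)) ++ [(d', q')] ∈ et} := by
    funext d'; ext q'
    simp only [Set.mem_setOf_eq, Set.mem_preimage, List.map_append, List.map_cons,
      List.map_nil, List.cons_append]
    rfl
  show SatPBF {d' | (d :: e.map Prod.fst) ++ [d'] ∈ T.nodes}
    (fun d' => {q' : M.Q | (d, some q) :: (e ++ [(d', q')]).map liftp ∈ et})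
    (M.δ ((M.withInit q).stateOf e) (T.label (d :: e.map Prod.fst)))
  rw [hν]
  exact key

lemma accChild_of_mem_et {T : STree D A} {et : Set (List (D × Option M.Q))}
    (hroot : [] ∈ et)
    (hpref : ∀ (l : List (D × Option M.Q)) p, l ++ [p] ∈ et → l ∈ et)
    (hproj : ∀ l ∈ et, l.map Prod.fst ∈ T.nodes)
    (hsat : ∀ l ∈ et, SatPBF {d | l.map Prod.fst ++ [d] ∈ T.nodes}
        (fun d => {q : Option M.Q | l ++ [(d, q)] ∈ et})
        ((arrowEU M E U).δ ((arrowEU M E U).stateOf l) (T.label (l.map Prod.fst))))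
    (hb : ∀ b : ℕ → D × Option M.Q, (∀ k, (List.range k).map b ∈ et) →
      ParitySeq (fun k => (arrowEU M E U).ω (b k).2))
    {d : D} {q : M.Q} (hd : [d] ∈ T.nodes) (hq : [(d, some q)] ∈ et) :
    AccChild M q T d := by
  refine ⟨hd, {e : List (D × M.Q) | (d, some q) :: e.map liftp ∈ et},
    ⟨?_, ?_, ?_, ?_⟩, ?_⟩
  · exact hq
  · intro (e : List (D × M.Q)) (p : D × M.Q) h
    have h' : (d, some q) :: (e ++ [p]).map liftp ∈ et := h
    simp only [List.map_append, List.map_cons, List.map_nil] at h'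
    apply hpref ((d, some q) :: e.map liftp) (liftp p)
    rw [List.cons_append]
    exact h'
  · intro (e : List (D × M.Q)) he
    have := hproj _ he
    show [d] ++ e.map Prod.fst ∈ T.nodes
    simpa [liftp, List.map_map, Function.comp_def] using this
  · intro e he
    exact restrict_cond hsat d q e he
  · intro b hbm
    set B : ℕ → D × Option M.Q :=
      fun k => Nat.casesOn k (d, some q) (fun n => liftp (b n)) with hB
    have hball : ∀ k, (List.range k).map B ∈ et := by
      intro k
      cases k with
      | zero => exact hroot
      | succ n =>
        rw [List.range_succ_eq_map, List.map_cons, List.map_map]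
        show (d, some q) :: (List.range n).map (B ∘ Nat.succ) ∈ et
        have : (List.range n).map (B ∘ Nat.succ) = ((List.range n).map b).map liftp := by
          rw [List.map_map]; rfl
        rw [this]
        exact hbm n
    have hp := hb B hball
    exact (paritySeq_shift (s := fun k => (arrowEU M E U).ω (B k).2)
      (t := fun k => (M.withInit q).ω (b k).2) (fun k => rfl)).mpr hp

end AuxAut
section AuxGlue

variable {A D : Type} {M : APTA A}

/-- Clean restatement of: `q` is a suitable state for child `d` and `etd` is an
accepting execution tree of `M.withInit q` on the subtree at `d`. -/
def Good (M : APTA A) (T : STree D A) (U : Set M.Q) (m : Multiset (D × M.Q))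
    (d : D) (q : M.Q) (etd : Set (List (D × M.Q))) : Prop :=
  ((d ∈ m.map Prod.fst → (d, q) ∈ m) ∧ (d ∉ m.map Prod.fst → q ∈ U)) ∧
  ([] ∈ etd) ∧
  (∀ (e : List (D × M.Q)) p, e ++ [p] ∈ etd → e ∈ etd) ∧
  (∀ e ∈ etd, [d] ++ e.map Prod.fst ∈ T.nodes) ∧
  (∀ e ∈ etd, SatPBF {d' | ([d] ++ e.map Prod.fst) ++ [d'] ∈ T.nodes}
      (fun d' => {q' : M.Q | e ++ [(d', q')] ∈ etd})
      (M.δ ((M.withInit q).stateOf e) (T.label ([d] ++ e.map Prod.fst)))) ∧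
  (∀ b : ℕ → D × M.Q, (∀ k, (List.range k).map b ∈ etd) →
      ParitySeq (fun k => M.ω (b k).2))

lemma good_of_accChild {T : STree D A} {U : Set M.Q} {m : Multiset (D × M.Q)}
    {d : D} {q : M.Q}
    (h1 : d ∈ m.map Prod.fst → (d, q) ∈ m) (h2 : d ∉ m.map Prod.fst → q ∈ U)
    (h : AccChild M q T d) : ∃ etd, Good M T U m d q etd := by
  obtain ⟨hd, et, ⟨c1, c2, c3, c4⟩, hbr⟩ := h
  exact ⟨et, ⟨h1, h2⟩, c1, c2, c3, c4, hbr⟩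

lemma glue_cond {E : Multiset M.Q} {U : Set M.Q} {T : STree D A}
    {ET : Set (List (D × Option M.Q))} (d : D) (q : M.Q)
    (etd : Set (List (D × M.Q)))
    (hsub : ∀ e' ∈ etd, (d, some q) :: e'.map liftp ∈ ET)
    (e : List (D × M.Q)) (he : e ∈ etd)
    (hsat : SatPBF {d' | ([d] ++ e.map Prod.fst) ++ [d'] ∈ T.nodes}
      (fun d' => {q' : M.Q | e ++ [(d', q')] ∈ etd})
      (M.δ ((M.withInit q).stateOf e) (T.label ([d] ++ e.map Prod.fst)))) :
    SatPBF {d' | (((d, some q) :: e.map liftp : List (D × Option M.Q)).map Prod.fst)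
        ++ [d'] ∈ T.nodes}
      (fun d' => {q' : Option M.Q | ((d, some q) :: e.map liftp :
          List (D × Option M.Q)) ++ [(d', q')] ∈ ET})
      ((arrowEU M E U).δ ((arrowEU M E U).stateOf
          ((d, some q) :: e.map liftp : List (D × Option M.Q)))
        (T.label (((d, some q) :: e.map liftp :
          List (D × Option M.Q)).map Prod.fst))) := by
  have hfst : ((d, some q) :: e.map liftp : List (D × Option M.Q)).map Prod.fst
      = d :: e.map Prod.fst := by simp [liftp]
  rw [hfst, stateOf_cons_lift]
  show SatPBF {d' | (d :: e.map Prod.fst) ++ [d'] ∈ T.nodes}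
    (fun d' => {q' : Option M.Q | ((d, some q) :: e.map liftp :
        List (D × Option M.Q)) ++ [(d', q')] ∈ ET})
    ((M.δ ((M.withInit q).stateOf e) (T.label (d :: e.map Prod.fst))).map
      (EUPair.map some))
  apply satPBF_push (ν := fun d' => {q' : M.Q | e ++ [(d', q')] ∈ etd})
  · rintro d' - x ⟨q', hq', rfl⟩
    show ((d, some q) :: e.map liftp : List (D × Option M.Q)) ++ [(d', some q')] ∈ ET
    have := hsub (e ++ [(d', q')]) hq'
    simp only [List.map_append, List.map_cons, List.map_nil] at this
    rw [List.cons_append]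
    exact this
  · exact hsat

end AuxGlue
section AuxGlue2

variable {A D : Type} {M : APTA A}

lemma accepts_of_accE {E : Multiset M.Q} {U : Set M.Q} {T : STree D A}
    {m : Multiset (D × M.Q)} (hw : Witness M T E m)
    (hcov : ∀ d, [d] ∈ T.nodes → d ∉ m.map Prod.fst → ∃ u ∈ U, AccChild M u T d) :
    (arrowEU M E U).Accepts T := by
  classical
  obtain ⟨hnd, hsnd, hmac⟩ := hw
  have hex : ∀ d, [d] ∈ T.nodes → ∃ q etd, Good M T U m d q etd := by
    intro d hd
    by_cases hdm : d ∈ m.map Prod.fst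
    · obtain ⟨p, hp, hp1⟩ := Multiset.mem_map.1 hdm
      subst hp1
      exact ⟨p.2, good_of_accChild (fun _ => hp) (fun hn => absurd hdm hn) (hmac p hp)⟩
    · obtain ⟨u, hu, hau⟩ := hcov d hd hdm
      exact ⟨u, good_of_accChild (fun h => absurd h hdm) (fun _ => hu) hau⟩
  choose Fq FT hGood using hex
  set ET : Set (List (D × Option M.Q)) := insert []
    {l | ∃ (d : D) (hd : [d] ∈ T.nodes) (e : List (D × M.Q)),
      e ∈ FT d hd ∧ l = (d, some (Fq d hd)) :: e.map liftp} with hET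
  have hmemET : ∀ (d : D) (hd : [d] ∈ T.nodes) (e : List (D × M.Q)), e ∈ FT d hd →
      (d, some (Fq d hd)) :: e.map liftp ∈ ET := by
    intro d hd e he
    exact Set.mem_insert_of_mem _ ⟨d, hd, e, he, rfl⟩
  refine ⟨ET, ⟨Set.mem_insert _ _, ?_, ?_, ?_⟩, ?_⟩
  -- prefix-closed
  · intro l p hlp
    rcases Set.mem_insert_iff.1 hlp with h | ⟨d, hd, e, he, heq⟩
    · cases l <;> cases h
    · cases l with
      | nil => exact Set.mem_insert _ _
      | cons x l' =>
        rw [List.cons_append] at heq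
        injection heq with h1 h2
        rcases List.eq_nil_or_concat e with rfl | ⟨e₀, p₀, rfl⟩
        · cases l' <;> cases h2
        · simp only [List.concat_eq_append, List.map_append, List.map_cons,
            List.map_nil] at h2
          obtain ⟨h3, -⟩ := List.append_inj' h2 rfl
          refine Set.mem_insert_of_mem _ ⟨d, hd, e₀, ?_, ?_⟩
          · rw [List.concat_eq_append] at he
            exact (hGood d hd).2.2.1 e₀ p₀ he
          · rw [h1, h3]
            exact rfl
  -- projection
  · intro l hl
    rcases Set.mem_insert_iff.1 hl with rfl | ⟨d, hd, e, he, rfl⟩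
    · exact T.root_mem
    · have h3 := (hGood d hd).2.2.2.1 e he
      show ((d, some (Fq d hd)) :: e.map liftp : List (D × Option M.Q)).map Prod.fst ∈ T.nodes
      simpa [liftp, List.map_map, Function.comp_def] using h3
  -- transitions
  · intro l hl
    rcases Set.mem_insert_iff.1 hl with rfl | ⟨d, hd, e, he, rfl⟩
    · show SatEU {d | [d] ∈ T.nodes} (fun d => {q : Option M.Q | [(d, q)] ∈ ET})
        (E.map some, some '' U)
      refine ⟨fun d => if hd : [d] ∈ T.nodes then some (Fq d hd) else none, ?_,
        m.map Prod.fst, hnd, ?_, ?_, ?_⟩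
      · intro d hd
        have hd' : [d] ∈ T.nodes := hd
        show (if h : [d] ∈ T.nodes then some (Fq d h) else none) ∈
          {q : Option M.Q | [(d, q)] ∈ ET}
        rw [dif_pos hd']
        exact hmemET d hd' [] (hGood d hd').2.1
      · intro d hdm
        obtain ⟨p, hp, hpeq⟩ := Multiset.mem_map.1 hdm
        obtain ⟨hpd, -⟩ := hmac p hp
        rw [← hpeq]
        exact hpd
      · show (m.map Prod.fst).map _ = E.map some
        rw [Multiset.map_map]
        have hpt : ∀ p ∈ m, ((fun d => if hd : [d] ∈ T.nodes then
            some (Fq d hd) else none) ∘ Prod.fst) p = (some ∘ Prod.snd) p := by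
          intro p hp
          obtain ⟨hpd, -⟩ := hmac p hp
          show (if hd : [p.1] ∈ T.nodes then some (Fq p.1 hd) else none) = some p.2
          rw [dif_pos hpd]
          have hmem : p.1 ∈ m.map Prod.fst := Multiset.mem_map_of_mem _ hp
          have h1 : (p.1, Fq p.1 hpd) ∈ m := (hGood p.1 hpd).1.1 hmem
          have h2 : (p.1, p.2) ∈ m := hp
          rw [nodup_fst_unique hnd h1 h2]
        rw [Multiset.map_congr rfl hpt, ← Multiset.map_map, hsnd]
      · intro d hd hdm
        have hd' : [d] ∈ T.nodes := hd
        show (if h : [d] ∈ T.nodes then some (Fq d h) else none) ∈ some '' U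
        rw [dif_pos hd']
        exact ⟨Fq d hd', (hGood d hd').1.2 hdm, rfl⟩
    · exact glue_cond d (Fq d hd) (FT d hd) (fun e' he' => hmemET d hd e' he') e he
        ((hGood d hd).2.2.2.2.1 e he)
  -- branches
  · intro b hbm
    have h1 := hbm 1
    have hr1 : List.range 1 = [0] := by simp [List.range_succ]
    rw [hr1, List.map_cons, List.map_nil] at h1
    rcases Set.mem_insert_iff.1 h1 with h | ⟨d, hd, e, he, heq⟩
    · simp at h
    · injection heq with hb0 htl
      have hkey : ∀ k, ∃ e ∈ FT d hd,
          List.map liftp e = (List.range k).map (b ∘ Nat.succ) := by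
        intro k
        have hk := hbm (k + 1)
        rw [List.range_succ_eq_map, List.map_cons, List.map_map] at hk
        rcases Set.mem_insert_iff.1 hk with h | ⟨d', hd', e', he', heq'⟩
        · simp at h
        · injection heq' with hh ht
          rw [hb0] at hh
          have hd1 : d = d' := congrArg Prod.fst hh
          subst hd1
          exact ⟨e', he', ht.symm⟩
      set b' : ℕ → D × M.Q :=
        fun j => ((b (j + 1)).1, ((b (j + 1)).2).getD (Fq d hd)) with hb'
      have hlift : ∀ j, liftp (b' j) = b (j + 1) := by
        intro j
        obtain ⟨e₁, he₁, hmape⟩ := hkey (j + 1)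
        have hjmem : b (j + 1) ∈ List.map liftp e₁ := by
          rw [hmape]
          exact List.mem_map_of_mem (List.mem_range.2 (by omega))
        obtain ⟨y, hy, hyeq⟩ := List.mem_map.1 hjmem
        have hbj : b' j = y := by
          rw [hb']
          simp only [← hyeq, liftp, Option.getD_some]
        rw [hbj, hyeq]
      have hball : ∀ k, (List.range k).map b' ∈ FT d hd := by
        intro k
        obtain ⟨e₁, he₁, hmape⟩ := hkey k
        have heq1 : (List.range k).map b' = e₁ := by
          apply List.map_injective_iff.2 (liftp_injective (D := D) (Q := M.Q))
          rw [hmape, List.map_map]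
          exact List.map_congr_left fun j _ => hlift j
        rw [heq1]
        exact he₁
      have hp := (hGood d hd).2.2.2.2.2 b' hball
      refine (paritySeq_shift (s := fun k => (arrowEU M E U).ω (b k).2)
        (t := fun k => M.ω (b' k).2) ?_).mp hp
      intro k
      show (arrowEU M E U).ω (b (k + 1)).2 = M.ω (b' k).2
      rw [← hlift k]
      rfl

end AuxGlue2
section AuxFwd

variable {A D : Type} {M : APTA A}

lemma accE_of_accepts {E : Multiset M.Q} {U : Set M.Q} {T : STree D A}
    (h : (arrowEU M E U).Accepts T) :
    ∃ m : Multiset (D × M.Q), Witness M T E m ∧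
      ∀ d, [d] ∈ T.nodes → d ∉ m.map Prod.fst → ∃ u ∈ U, AccChild M u T d := by
  classical
  obtain ⟨et0, ⟨hroot0, hpref0, hproj0, hsat0⟩, hb0⟩ := h
  have h0 : SatEU {d | [d] ∈ T.nodes} (fun d => {q : Option M.Q | [(d, q)] ∈ et0})
      (E.map some, some '' U) := hsat0 [] hroot0
  obtain ⟨f, hf, m₀, hnd₀, hmem₀, hmap₀, hrest₀⟩ := h0
  have hmap₀' : m₀.map f = E.map some := hmap₀
  have hrest₀' : ∀ d, [d] ∈ T.nodes → d ∉ m₀ → f d ∈ some '' U := hrest₀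
  by_cases hne : Nonempty M.Q
  · obtain ⟨q₀⟩ := hne
    set g : D → M.Q := fun d => (f d).getD q₀ with hg
    have hsome : ∀ d, [d] ∈ T.nodes → f d = some (g d) := by
      intro d hd
      by_cases hdm : d ∈ m₀
      · have h1 : f d ∈ Multiset.map f m₀ := Multiset.mem_map_of_mem f hdm
        rw [hmap₀'] at h1
        obtain ⟨x, -, hx⟩ := Multiset.mem_map.1 h1
        simp [hg, ← hx, Option.getD_some]
      · obtain ⟨u, -, hu⟩ := hrest₀' d hd hdm
        simp [hg, ← hu, Option.getD_some]
    have hacc : ∀ d, [d] ∈ T.nodes → AccChild M (g d) T d := by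
      intro d hd
      have h2 : [(d, f d)] ∈ et0 := hf d hd
      rw [hsome d hd] at h2
      exact accChild_of_mem_et hroot0 hpref0 hproj0 hsat0 hb0 hd h2
    refine ⟨m₀.map (fun d => (d, g d)), ⟨?_, ?_, ?_⟩, ?_⟩
    · rw [Multiset.map_map]
      simpa using hnd₀
    · rw [Multiset.map_map]
      have hc : m₀.map (Prod.snd ∘ fun d => (d, g d)) = m₀.map g := rfl
      rw [hc]
      apply Multiset.map_injective (Option.some_injective M.Q)
      show (m₀.map g).map some = E.map some
      rw [Multiset.map_map, ← hmap₀']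
      exact Multiset.map_congr rfl fun d hd => (hsome d (hmem₀ d hd)).symm
    · intro p hp
      obtain ⟨d, hdm, rfl⟩ := Multiset.mem_map.1 hp
      exact hacc d (hmem₀ d hdm)
    · intro d hd hdm
      have hdm' : d ∉ m₀ := by
        intro hc
        apply hdm
        rw [Multiset.map_map]
        simpa using hc
      obtain ⟨u, hu, huf⟩ := hrest₀' d hd hdm'
      have h5 : u = g d := Option.some_injective _ (huf.trans (hsome d hd))
      exact ⟨g d, h5 ▸ hu, hacc d hd⟩
  · rw [not_nonempty_iff] at hne
    have hE : E = 0 := Multiset.eq_zero_of_forall_notMem fun x => (hne.false x).elim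
    refine ⟨0, ⟨by simp, by simp [hE], fun p hp => absurd hp (Multiset.notMem_zero p)⟩, ?_⟩
    intro d hd _
    exfalso
    have hm₀ : m₀ = 0 := by
      have h6 := hmap₀'
      rw [hE] at h6
      simp only [Multiset.map_zero] at h6
      exact Multiset.map_eq_zero.1 h6
    have hdm : d ∉ m₀ := by rw [hm₀]; exact Multiset.notMem_zero d
    obtain ⟨u, -, -⟩ := hrest₀' d hd hdm
    exact hne.false u

end AuxFwd
/-- `T` is not accepted by `A_{▷⟨E;U⟩}` iff either (a) at least
`|E|+1` direct subtrees are accepted by no `A_u` (`u ∈ U`), or (b) there is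
`0 ≤ k ≤ |E|` such that at least `k` direct subtrees are accepted by no `A_u`,
and there do not exist `|E|` direct subtrees witnessing the existential part `E`
of which at least `k` are accepted by no `A_u`. -/
theorem stmt7 (A D : Type) (M : APTA A)
    (T : STree D A) (E : Multiset M.Q) (U : Set M.Q) :
    ¬ (arrowEU M E U).Accepts T ↔
      ((∃ s : Multiset D, s.Nodup ∧ Multiset.card E + 1 ≤ Multiset.card s ∧
          ∀ d ∈ s, [d] ∈ T.nodes ∧ ∀ u ∈ U, ¬ AccChild M u T d) ∨
       (∃ k ≤ Multiset.card E,
          (∃ s : Multiset D, s.Nodup ∧ Multiset.card s = k ∧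
            ∀ d ∈ s, [d] ∈ T.nodes ∧ ∀ u ∈ U, ¬ AccChild M u T d) ∧
          ¬ ∃ m : Multiset (D × M.Q), Witness M T E m ∧
              ∃ b ≤ m, Multiset.card b = k ∧
                ∀ p ∈ b, ∀ u ∈ U, ¬ AccChild M u T p.1)) := by
  classical
  have key : (arrowEU M E U).Accepts T ↔
      ∃ m : Multiset (D × M.Q), Witness M T E m ∧
        ∀ d, [d] ∈ T.nodes → d ∉ m.map Prod.fst → ∃ u ∈ U, AccChild M u T d :=
    ⟨accE_of_accepts, fun ⟨_, hw, hcov⟩ => accepts_of_accE hw hcov⟩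
  rw [key]
  constructor
  · intro hn
    by_cases ha : ∃ s : Multiset D, s.Nodup ∧ Multiset.card E + 1 ≤ Multiset.card s ∧
        ∀ d ∈ s, [d] ∈ T.nodes ∧ ∀ u ∈ U, ¬ AccChild M u T d
    · exact Or.inl ha
    · right
      set B : Set D := {d | [d] ∈ T.nodes ∧ ∀ u ∈ U, ¬ AccChild M u T d} with hB
      have hBfin : B.Finite := by
        by_contra hinf
        rw [← Set.Infinite] at hinf
        obtain ⟨t, hsub, hcard⟩ := hinf.exists_subset_card_eq (Multiset.card E + 1)
        exact ha ⟨t.val, t.nodup, le_of_eq hcard.symm, fun d hd => hsub hd⟩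
      set k := hBfin.toFinset.card with hk
      have hkE : k ≤ Multiset.card E := by
        by_contra hgt
        push_neg at hgt
        apply ha
        refine ⟨hBfin.toFinset.val, hBfin.toFinset.nodup, ?_, ?_⟩
        · show Multiset.card E + 1 ≤ Multiset.card hBfin.toFinset.val
          have hcv : Multiset.card hBfin.toFinset.val = k := rfl
          omega
        · intro d hd
          exact hBfin.mem_toFinset.1 hd
      refine ⟨k, hkE, ⟨hBfin.toFinset.val, hBfin.toFinset.nodup, rfl,
        fun d hd => hBfin.mem_toFinset.1 hd⟩, ?_⟩
      rintro ⟨m, hw, b, hbm, hbcard, hbbad⟩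
      apply hn
      refine ⟨m, hw, ?_⟩
      intro d hd hdm
      by_cases hgood : ∃ u ∈ U, AccChild M u T d
      · exact hgood
      · exfalso
        push_neg at hgood
        have hdB : d ∈ B := ⟨hd, hgood⟩
        have hbnd : (b.map Prod.fst).Nodup :=
          Multiset.nodup_of_le (Multiset.map_le_map hbm) hw.1
        have hbsub : ∀ x ∈ (⟨b.map Prod.fst, hbnd⟩ : Finset D), x ∈ hBfin.toFinset := by
          intro x hx
          obtain ⟨p, hp, rfl⟩ := Multiset.mem_map.1 hx
          have hpm : p ∈ m := Multiset.mem_of_le hbm hp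
          obtain ⟨hpd, -⟩ := hw.2.2 p hpm
          exact hBfin.mem_toFinset.2 ⟨hpd, hbbad p hp⟩
        have hcard2 : hBfin.toFinset.card ≤ (⟨b.map Prod.fst, hbnd⟩ : Finset D).card := by
          show k ≤ Multiset.card (b.map Prod.fst)
          rw [Multiset.card_map, hbcard]
        have heqf : (⟨b.map Prod.fst, hbnd⟩ : Finset D) = hBfin.toFinset :=
          Finset.eq_of_subset_of_card_le hbsub hcard2
        have hdbf : d ∈ (⟨b.map Prod.fst, hbnd⟩ : Finset D) := by
          rw [heqf]
          exact hBfin.mem_toFinset.2 hdB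
        exact hdm (Multiset.mem_of_le (Multiset.map_le_map hbm) hdbf)
  · rintro (⟨s, hnd, hcard, hbad⟩ | ⟨k, hk, ⟨s, hnd, hscard, hbad⟩, hnw⟩) ⟨m, hw, hcov⟩
    · have hsub : s ≤ m.map Prod.fst := by
        rw [Multiset.le_iff_subset hnd]
        intro d hd
        by_contra hdm
        obtain ⟨u, hu, hau⟩ := hcov d (hbad d hd).1 hdm
        exact (hbad d hd).2 u hu hau
      have hle := Multiset.card_le_card hsub
      rw [Multiset.card_map] at hle
      have hcm : Multiset.card m = Multiset.card E := by
        rw [← hw.2.1, Multiset.card_map]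
      omega
    · apply hnw
      have hsub : s ≤ m.map Prod.fst := by
        rw [Multiset.le_iff_subset hnd]
        intro d hd
        by_contra hdm
        obtain ⟨u, hu, hau⟩ := hcov d (hbad d hd).1 hdm
        exact (hbad d hd).2 u hu hau
      obtain ⟨b, hbm, hbs⟩ := exists_le_of_le_map hsub
      refine ⟨m, hw, b, hbm, ?_, ?_⟩
      · rw [show Multiset.card b = Multiset.card (b.map Prod.fst) from
          (Multiset.card_map _ _).symm, hbs, hscard]
      · intro p hp u hu
        exact (hbad p.1 (by rw [← hbs]; exact Multiset.mem_map_of_mem _ hp)).2 u hu
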